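/- Let E be a real inner product space, let v_T, a, b ∈ E, and let α_T, α_{T-k}, σ_T, σ_{T-k}, ω_ℓ, ω_w be real scalars with α_T ≠ 0 and α_{T-k} ≠ 0. Suppose e1 = (1 + ω_ℓ)·a − ω_ℓ·b and e2 = (1 + ω_w)·a − ω_w·b, and define v_{T-k} := (α_{T-k}/α_T)·(v_T − σ_T·e1) + σ_{T-k}·e1 and v'_T := (α_T/α_{T-k})·(v_{T-k} − σ_{T-k}·e2) + σ_T·e2. Then v'_T = v_T + κ·g_s, where κ := (ω_ℓ − ω_w)·(α_T·σ_{T-k} − α_{T-k}·σ_T)/α_{T-k} and g_s := a − b. -/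
import Mathlib

/-- Theorem 1 (closed form of informative noise via one round of re-denoising),
with exact equality of guided noise predictions. -/
theorem informative_noise_closed_form
    {E : Type*} [NormedAddCommGroup E] [InnerProductSpace ℝ E]
    (vT a b e1 e2 : E) (αT αTk σT σTk ωℓ ωw : ℝ)
    (hαT : αT ≠ 0) (hαTk : αTk ≠ 0)
    (h1 : e1 = (1 + ωℓ) • a - ωℓ • b)
    (h2 : e2 = (1 + ωw) • a - ωw • b)
    (vTk v'T : E)
    (hdenoise : vTk = (αTk / αT) • (vT - σT • e1) + σTk • e1)
    (hinvert : v'T = (αT / αTk) • (vTk - σTk • e2) + σT • e2) :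
    v'T = vT + ((ωℓ - ωw) * (αT * σTk - αTk * σT) / αTk) • (a - b) := by
  subst h1 h2 hdenoise hinvert
  match_scalars <;> field_simp <;> ring
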